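/- Let A, D be densely defined closed operators in Hilbert spaces H₁, H₂ respectively, C : dom(A) → H₂ a closable operator with dom(A) ⊆ dom(C), and ρ(A) ≠ ∅. Consider the closure 𝒜 of the lower-triangular operator matrix with entries A, 0, C, D in H₁ ⊕ H₂. If λ ∈ ρ(A), then λ belongs to the essential spectrum σ_{e2}(𝒜) (existence of a singular Weyl sequence) if and only if λ ∈ σ_{e2}(D̄). -/

import Mathlib

open Filter
open scoped InnerProductSpace

/-- Relative boundedness of `C` with respect to `A`, from the closed graph theorem. -/
lemma aux_rel_bound {H₁ H₂ : Type*}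
    [NormedAddCommGroup H₁] [NormedSpace ℂ H₁] [CompleteSpace H₁]
    [NormedAddCommGroup H₂] [NormedSpace ℂ H₂] [CompleteSpace H₂]
    (A : H₁ →ₗ.[ℂ] H₁) (C : H₁ →ₗ.[ℂ] H₂)
    (hAclosed : IsClosed (A.graph : Set (H₁ × H₁)))
    (hCclosable : C.IsClosable) (hCdom : A.domain ≤ C.domain) :
    ∃ M : ℝ, 0 ≤ M ∧ ∀ x : A.domain, ‖C ⟨(x : H₁), hCdom x.2⟩‖ ≤ M * max ‖(x : H₁)‖ ‖A x‖ := by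
  haveI : CompleteSpace A.graph := hAclosed.completeSpace_coe
  have mem_fst : ∀ g : A.graph, ((g : H₁ × H₁)).1 ∈ A.domain := fun g =>
    LinearPMap.mem_domain_of_mem_graph (x := (g : H₁ × H₁).1) (y := (g : H₁ × H₁).2)
      (by simp)
  let j : A.graph →ₗ[ℂ] C.domain :=
    { toFun := fun g => ⟨(g : H₁ × H₁).1, hCdom (mem_fst g)⟩
      map_add' := fun a b => Subtype.ext rfl
      map_smul' := fun c a => Subtype.ext rfl }
  let Φ : A.graph →ₗ[ℂ] H₂ := C.toFun.comp j
  have hcont : Continuous Φ := by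
    apply Φ.continuous_of_seq_closed_graph
    intro u x y hux huy
    have hmem : ∀ n, (((u n : H₁ × H₁)).1, Φ (u n)) ∈ C.graph := fun n => by
      rw [LinearPMap.mem_graph_iff']
      exact ⟨j (u n), rfl⟩
    have hconv : Tendsto (fun n => (((u n : H₁ × H₁)).1, Φ (u n))) atTop
        (nhds (((x : H₁ × H₁)).1, y)) := by
      refine Tendsto.prodMk_nhds ?_ huy
      exact (continuous_fst.tendsto _).comp ((continuous_subtype_val.tendsto _).comp hux)
    have hcl : (((x : H₁ × H₁)).1, y) ∈ C.closure.graph := by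
      rw [← hCclosable.graph_closure_eq_closure_graph]
      have : (((x : H₁ × H₁)).1, y) ∈ closure (C.graph : Set (H₁ × H₂)) :=
        mem_closure_of_tendsto hconv (Filter.Eventually.of_forall hmem)
      rw [← Submodule.topologicalClosure_coe] at this
      exact this
    have hxdom : ((x : H₁ × H₁)).1 ∈ C.closure.domain :=
      C.le_closure.1 (hCdom (mem_fst x))
    have hy : y = C.closure ⟨((x : H₁ × H₁)).1, hxdom⟩ :=
      (LinearPMap.image_iff hxdom).mpr hcl
    have : Φ x = C.closure ⟨((x : H₁ × H₁)).1, hxdom⟩ :=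
      C.le_closure.2 rfl
    rw [hy, this]
  let Φ' : A.graph →L[ℂ] H₂ := ⟨Φ, hcont⟩
  refine ⟨‖Φ'‖, norm_nonneg Φ', fun x => ?_⟩
  have hx : ((x : H₁), A x) ∈ A.graph := A.mem_graph x
  have := Φ'.le_opNorm ⟨((x : H₁), A x), hx⟩
  have hΦval : Φ' ⟨((x : H₁), A x), hx⟩ = C ⟨(x : H₁), hCdom x.2⟩ := rfl
  rw [hΦval] at this
  simpa [Prod.norm_def] using this

/-- The essential spectrum `σ_{e2}` of a partially defined operator: `λ` belongs to it iff there
is a singular (Weyl) sequence, i.e. unit vectors of the domain converging weakly to `0` with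
`‖(T − λ)xₙ‖ → 0`. -/
def sigmaE2 {E : Type*} [NormedAddCommGroup E] [NormedSpace ℂ E] (T : E →ₗ.[ℂ] E) : Set ℂ :=
  {l | ∃ x : ℕ → T.domain, (∀ n, ‖(x n : E)‖ = 1) ∧
    (∀ φ : E →L[ℂ] ℂ, Tendsto (fun n => φ (x n)) atTop (nhds 0)) ∧
    Tendsto (fun n => ‖T (x n) - l • ((x n : E))‖) atTop (nhds 0)}

/-- `λ` belongs to the resolvent set of the partially defined operator `T`:
`T − λ` has a bounded everywhere-defined two-sided inverse. -/
def inResolvent {E : Type*} [NormedAddCommGroup E] [NormedSpace ℂ E]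
    (T : E →ₗ.[ℂ] E) (l : ℂ) : Prop :=
  ∃ R : E →L[ℂ] E, (∀ y : E, ∃ h : R y ∈ T.domain, T ⟨R y, h⟩ - l • R y = y) ∧
    (∀ x : T.domain, R (T x - l • (x : E)) = (x : E))

/-- Let `A`, `D` be densely defined closed/closable operators in Hilbert spaces
`H₁`, `H₂`, `C` closable with `dom A ⊆ dom C`, and let `𝒜` be the closure of the lower
triangular operator matrix `[[A, 0], [C, D]]`, i.e. the operator
`(x, y) ↦ (Ax, Cx + D̄y)` on `dom A ⊕ dom D̄`.  If `λ ∈ ρ(A)`, then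
`λ ∈ σ_{e2}(𝒜) ↔ λ ∈ σ_{e2}(D̄)`. -/
theorem stmt_6 {H₁ H₂ : Type*}
    [NormedAddCommGroup H₁] [InnerProductSpace ℂ H₁] [CompleteSpace H₁]
    [NormedAddCommGroup H₂] [InnerProductSpace ℂ H₂] [CompleteSpace H₂]
    (A : H₁ →ₗ.[ℂ] H₁) (D : H₂ →ₗ.[ℂ] H₂) (C : H₁ →ₗ.[ℂ] H₂)
    (hAdense : Dense (A.domain : Set H₁)) (hAclosed : IsClosed (A.graph : Set (H₁ × H₁)))
    (hDdense : Dense (D.domain : Set H₂)) (hDclosable : D.IsClosable)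
    (hCclosable : C.IsClosable) (hCdom : A.domain ≤ C.domain)
    (𝒜 : (H₁ × H₂) →ₗ.[ℂ] (H₁ × H₂))
    (h𝒜dom : ∀ p : H₁ × H₂, p ∈ 𝒜.domain ↔ p.1 ∈ A.domain ∧ p.2 ∈ D.closure.domain)
    (h𝒜act : ∀ (p : 𝒜.domain) (h1 : (p : H₁ × H₂).1 ∈ A.domain)
      (h2 : (p : H₁ × H₂).2 ∈ D.closure.domain),
      𝒜 p = (A ⟨(p : H₁ × H₂).1, h1⟩,
        C ⟨(p : H₁ × H₂).1, hCdom h1⟩ + D.closure ⟨(p : H₁ × H₂).2, h2⟩))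
    (l : ℂ) (hl : inResolvent A l) :
    l ∈ sigmaE2 𝒜 ↔ l ∈ sigmaE2 D.closure := by
  obtain ⟨R, -, hR⟩ := hl
  obtain ⟨M, hM0, hM⟩ := aux_rel_bound A C hAclosed hCclosable hCdom
  constructor
  · rintro ⟨p, hp1, hp2, hp3⟩
    -- extract components
    have h1 : ∀ n, ((p n : H₁ × H₂)).1 ∈ A.domain := fun n => ((h𝒜dom _).mp (p n).2).1
    have h2 : ∀ n, ((p n : H₁ × H₂)).2 ∈ D.closure.domain := fun n => ((h𝒜dom _).mp (p n).2).2
    set u : ℕ → A.domain := fun n => ⟨((p n : H₁ × H₂)).1, h1 n⟩ with hu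
    set v : ℕ → D.closure.domain := fun n => ⟨((p n : H₁ × H₂)).2, h2 n⟩ with hv
    have hval : ∀ n, 𝒜 (p n) =
        (A (u n), C ⟨(u n : H₁), hCdom (u n).2⟩ + D.closure (v n)) := fun n =>
      h𝒜act (p n) (h1 n) (h2 n)
    -- the residuals
    have hres1 : ∀ n, (𝒜 (p n) - l • ((p n : H₁ × H₂))).1
        = A (u n) - l • ((u n : H₁)) := by
      intro n; rw [hval n]; rfl
    have hres2 : ∀ n, (𝒜 (p n) - l • ((p n : H₁ × H₂))).2
        = C ⟨(u n : H₁), hCdom (u n).2⟩ + D.closure (v n) - l • ((v n : H₂)) := by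
      intro n; rw [hval n]; rfl
    -- first residual tends to 0 in norm
    have hA1 : Tendsto (fun n => ‖A (u n) - l • ((u n : H₁))‖) atTop (nhds 0) := by
      refine squeeze_zero (fun n => norm_nonneg _) (fun n => ?_) hp3
      rw [← hres1 n]; exact norm_fst_le _
    have hA1' : Tendsto (fun n => A (u n) - l • ((u n : H₁))) atTop (nhds 0) :=
      tendsto_zero_iff_norm_tendsto_zero.mpr hA1
    -- u n → 0 via the resolvent
    have hu0 : Tendsto (fun n => ((u n : H₁))) atTop (nhds 0) := by
      have : Tendsto (fun n => R (A (u n) - l • ((u n : H₁)))) atTop (nhds (R 0)) :=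
        (R.continuous.tendsto 0).comp hA1'
      simpa [hR] using this
    -- A u n → 0
    have hAu0 : Tendsto (fun n => A (u n)) atTop (nhds 0) := by
      have : Tendsto (fun n => (A (u n) - l • ((u n : H₁))) + l • ((u n : H₁))) atTop
          (nhds (0 + l • (0 : H₁))) := hA1'.add (hu0.const_smul l)
      simpa using this
    -- C u n → 0 in norm
    have hCu0 : Tendsto (fun n => ‖C ⟨(u n : H₁), hCdom (u n).2⟩‖) atTop (nhds 0) := by
      have hmax : Tendsto (fun n => M * max ‖(u n : H₁)‖ ‖A (u n)‖) atTop (nhds (M * max 0 0)) :=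
        (tendsto_const_nhds.mul (((tendsto_zero_iff_norm_tendsto_zero.mp hu0)).max
          (tendsto_zero_iff_norm_tendsto_zero.mp hAu0)))
      simp only [max_self, mul_zero] at hmax
      exact squeeze_zero (fun n => norm_nonneg _) (fun n => hM (u n)) hmax
    -- D residual tends to 0
    have hDv : Tendsto (fun n => ‖D.closure (v n) - l • ((v n : H₂))‖) atTop (nhds 0) := by
      have hb : ∀ n, ‖D.closure (v n) - l • ((v n : H₂))‖ ≤
          ‖𝒜 (p n) - l • ((p n : H₁ × H₂))‖ + ‖C ⟨(u n : H₁), hCdom (u n).2⟩‖ := by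
        intro n
        have : D.closure (v n) - l • ((v n : H₂)) =
            (𝒜 (p n) - l • ((p n : H₁ × H₂))).2 - C ⟨(u n : H₁), hCdom (u n).2⟩ := by
          rw [hres2 n]; abel
        rw [this]
        exact le_trans (norm_sub_le _ _) (by gcongr; exact norm_snd_le _)
      have := hp3.add hCu0
      simp only [add_zero] at this
      exact squeeze_zero (fun n => norm_nonneg _) hb this
    -- eventually ‖u n‖ < 1, hence ‖v n‖ = 1
    have hev : ∀ᶠ n in atTop, ‖(u n : H₁)‖ < 1 := by
      have := tendsto_zero_iff_norm_tendsto_zero.mp hu0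
      exact this.eventually (eventually_lt_nhds (by norm_num : (0:ℝ) < 1))
    obtain ⟨N, hN⟩ := eventually_atTop.mp hev
    have hvnorm : ∀ n, N ≤ n → ‖(v n : H₂)‖ = 1 := by
      intro n hn
      have h := hp1 n
      rw [Prod.norm_def] at h
      rcases le_or_gt ‖((p n : H₁ × H₂)).2‖ ‖((p n : H₁ × H₂)).1‖ with hc | hc
      · rw [max_eq_left hc] at h
        exact absurd h (ne_of_lt (hN n hn))
      · rw [max_eq_right hc.le] at h
        exact h
    refine ⟨fun n => v (n + N), fun n => hvnorm (n + N) (Nat.le_add_left N n), ?_, ?_⟩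
    · intro φ
      have hψ := hp2 (φ.comp (ContinuousLinearMap.snd ℂ H₁ H₂))
      have := hψ.comp (tendsto_add_atTop_nat N)
      exact this
    · exact hDv.comp (tendsto_add_atTop_nat N)
  · rintro ⟨y, hy1, hy2, hy3⟩
    have pmem : ∀ n, (((0 : H₁), ((y n : H₂))) : H₁ × H₂) ∈ 𝒜.domain := fun n =>
      (h𝒜dom _).mpr ⟨A.domain.zero_mem, (y n).2⟩
    refine ⟨fun n => ⟨((0 : H₁), ((y n : H₂))), pmem n⟩, fun n => ?_, ?_, ?_⟩
    · simp [Prod.norm_def, hy1 n]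
    · intro φ
      have := hy2 (φ.comp (ContinuousLinearMap.inr ℂ H₁ H₂))
      exact this
    · have hval : ∀ n, 𝒜 ⟨((0 : H₁), ((y n : H₂))), pmem n⟩ =
          (((0 : H₁)), D.closure (y n)) := by
        intro n
        rw [h𝒜act ⟨((0 : H₁), ((y n : H₂))), pmem n⟩ A.domain.zero_mem (y n).2]
        have hA0 : A ⟨(0 : H₁), A.domain.zero_mem⟩ = 0 := by
          have : (⟨(0 : H₁), A.domain.zero_mem⟩ : A.domain) = 0 := Subtype.ext rfl
          rw [this, LinearPMap.map_zero]
        have hC0 : C ⟨(0 : H₁), hCdom A.domain.zero_mem⟩ = 0 := by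
          have : (⟨(0 : H₁), hCdom A.domain.zero_mem⟩ : C.domain) = 0 := Subtype.ext rfl
          rw [this, LinearPMap.map_zero]
        have hD : D.closure ⟨((y n : H₂)), (y n).2⟩ = D.closure (y n) := by
          congr 1
        rw [hA0, hC0, hD, zero_add]
      have heq : ∀ n, ‖𝒜 ⟨((0 : H₁), ((y n : H₂))), pmem n⟩
          - l • ((((0 : H₁), ((y n : H₂)))) : H₁ × H₂)‖
          = ‖D.closure (y n) - l • ((y n : H₂))‖ := by
        intro n
        rw [hval n]
        rw [Prod.norm_def]
        simp [Prod.smul_def]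
      simpa only [heq] using hy3
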